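/- arXiv:1306.5837 — 2 statements merged into one kernel-verified Lean document; each statement's English description precedes it below -/
import Mathlib

section
/- Let ρ ∈ (0,1), u ∈ C(ℝ² \ {0}) homogeneous of degree −ρ. If the mean-value transform ǔ(x) = (1/2π)∫_{S¹} u(x−ω)dω vanishes for every x ∈ ℝ² (with |x| ≠ 1), then u(x) = 0 for every x ∈ ℝ² \ {0}. -/
open MeasureTheory Real Filter Set Topology

/-- The mean-value transform `ǔ(x) = (1/2π) ∫_{S¹} u(x-ω) dω`. -/
noncomputable def mvt (u : ℝ × ℝ → ℝ) (x : ℝ × ℝ) : ℝ :=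
  (1 / (2 * Real.pi)) * ∫ θ in (0 : ℝ)..(2 * Real.pi), u (x - (Real.cos θ, Real.sin θ))

/-- injectivity of the circular mean-value transform on continuous
functions homogeneous of degree `-ρ`, `ρ ∈ (0,1)`. -/
theorem mvt_injective (ρ : ℝ) (hρ0 : 0 < ρ) (hρ1 : ρ < 1)
    (u : ℝ × ℝ → ℝ) (hu : ContinuousOn u {(0 : ℝ × ℝ)}ᶜ)
    (hhom : ∀ t : ℝ, 0 < t → ∀ x : ℝ × ℝ, x ≠ 0 → u (t • x) = t ^ (-ρ) * u x)
    (hvanish : ∀ x : ℝ × ℝ, x.1 ^ 2 + x.2 ^ 2 ≠ 1 → mvt u x = 0) :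
    ∀ x : ℝ × ℝ, x ≠ 0 → u x = 0 := by
  intro v hv
  have hvn : 0 < ‖v‖ := norm_pos_iff.mpr hv
  set ω : ℝ → ℝ × ℝ := fun θ => (Real.cos θ, Real.sin θ) with hωdef
  have hωnorm : ∀ θ, ‖ω θ‖ ≤ 1 := by
    intro θ
    simp only [hωdef, Prod.norm_def, Real.norm_eq_abs]
    exact max_le (abs_cos_le_one θ) (abs_sin_le_one θ)
  have hωcont : Continuous ω := by fun_prop
  -- points v - ε • ω θ are nonzero for |ε| < ‖v‖
  have hne : ∀ ε : ℝ, |ε| < ‖v‖ → ∀ θ, v - ε • ω θ ≠ 0 := by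
    intro ε hε θ h
    have h2 : v = ε • ω θ := by
      have := sub_eq_zero.mp h; exact this
    have : ‖v‖ ≤ |ε| := by
      rw [h2, norm_smul, Real.norm_eq_abs]
      calc |ε| * ‖ω θ‖ ≤ |ε| * 1 := by
            exact mul_le_mul_of_nonneg_left (hωnorm θ) (abs_nonneg ε)
        _ = |ε| := mul_one _
    linarith
  -- sup-norm squared bounded by sum of squares
  have hle : ‖v‖ ^ 2 ≤ v.1 ^ 2 + v.2 ^ 2 := by
    have h1 : ‖v‖ = max |v.1| |v.2| := by
      simp [Prod.norm_def, Real.norm_eq_abs]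
    rw [h1]
    rcases max_cases |v.1| |v.2| with ⟨h, _⟩ | ⟨h, _⟩ <;> rw [h, sq_abs] <;>
      nlinarith [sq_nonneg v.1, sq_nonneg v.2]
  set F : ℝ → ℝ := fun ε => ∫ θ in (0:ℝ)..(2 * Real.pi), u (v - ε • ω θ) with hFdef
  -- Step 1: F ε = 0 for 0 < ε < ‖v‖
  have step1 : ∀ ε : ℝ, 0 < ε → ε < ‖v‖ → F ε = 0 := by
    intro ε hε hεv
    have habs : |ε| < ‖v‖ := by rwa [abs_of_pos hε]
    have hεinv : (0:ℝ) < ε⁻¹ := inv_pos.mpr hε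
    have hcond : (ε⁻¹ • v).1 ^ 2 + (ε⁻¹ • v).2 ^ 2 ≠ 1 := by
      have h1 : (ε⁻¹ • v).1 = ε⁻¹ * v.1 := rfl
      have h2 : (ε⁻¹ • v).2 = ε⁻¹ * v.2 := rfl
      rw [h1, h2]
      intro hcontra
      have : v.1 ^ 2 + v.2 ^ 2 = ε ^ 2 := by
        field_simp at hcontra
        nlinarith [hcontra]
      nlinarith
    have h0 := hvanish (ε⁻¹ • v) hcond
    unfold mvt at h0
    have hπ : (1 / (2 * Real.pi)) ≠ 0 := by positivity
    have hI : (∫ θ in (0:ℝ)..(2 * Real.pi), u (ε⁻¹ • v - (Real.cos θ, Real.sin θ))) = 0 := by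
      rcases mul_eq_zero.mp h0 with h | h
      · exact absurd h hπ
      · exact h
    have hcongr : ∀ θ : ℝ,
        u (ε⁻¹ • v - (Real.cos θ, Real.sin θ)) = ε ^ ρ * u (v - ε • ω θ) := by
      intro θ
      have heq : ε⁻¹ • v - (Real.cos θ, Real.sin θ) = ε⁻¹ • (v - ε • ω θ) := by
        rw [smul_sub, smul_smul, inv_mul_cancel₀ (ne_of_gt hε), one_smul]
      rw [heq, hhom ε⁻¹ hεinv _ (hne ε habs θ)]
      congr 1
      rw [Real.inv_rpow hε.le, ← Real.rpow_neg hε.le, neg_neg]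
    have : (∫ θ in (0:ℝ)..(2 * Real.pi), u (ε⁻¹ • v - (Real.cos θ, Real.sin θ)))
        = ε ^ ρ * F ε := by
      rw [hFdef]
      rw [← intervalIntegral.integral_const_mul]
      apply intervalIntegral.integral_congr
      intro θ _
      exact hcongr θ
    rw [this] at hI
    have hερ : ε ^ ρ ≠ 0 := ne_of_gt (Real.rpow_pos_of_pos hε ρ)
    exact (mul_eq_zero.mp hI).resolve_left hερ
  -- bound on a compact annulus
  obtain ⟨C, hC⟩ : ∃ C, ∀ y ∈ Metric.closedBall v (‖v‖ / 2), ‖u y‖ ≤ C := by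
    apply (isCompact_closedBall v (‖v‖ / 2)).exists_bound_of_continuousOn
    apply hu.mono
    intro y hy hy0
    simp only [Set.mem_singleton_iff] at hy0
    subst hy0
    rw [Metric.mem_closedBall, dist_zero_left] at hy
    · linarith
  have hmem : ∀ ε : ℝ, ε ∈ Set.Ioo (0:ℝ) (‖v‖ / 2) → ∀ θ,
      v - ε • ω θ ∈ Metric.closedBall v (‖v‖ / 2) := by
    intro ε hε θ
    rw [Metric.mem_closedBall, dist_eq_norm]
    have : v - ε • ω θ - v = -(ε • ω θ) := by ring_nf
    rw [this, norm_neg, norm_smul, Real.norm_eq_abs, abs_of_pos hε.1]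
    calc ε * ‖ω θ‖ ≤ ε * 1 := mul_le_mul_of_nonneg_left (hωnorm θ) hε.1.le
      _ = ε := mul_one _
      _ ≤ ‖v‖ / 2 := hε.2.le
  have hIoo : Set.Ioo (0:ℝ) (‖v‖ / 2) ∈ 𝓝[>] (0:ℝ) :=
    Ioo_mem_nhdsGT (by linarith)
  -- Step 2: F ε → 2π * u v as ε → 0⁺
  have step2 : Tendsto F (𝓝[>] (0:ℝ)) (𝓝 (∫ θ in (0:ℝ)..(2 * Real.pi), u v)) := by
    apply intervalIntegral.tendsto_integral_filter_of_dominated_convergence (fun _ => C)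
    · filter_upwards [hIoo] with ε hε
      have : Continuous fun θ => u (v - ε • ω θ) := by
        apply hu.comp_continuous (by fun_prop)
        intro θ
        have : |ε| < ‖v‖ := by
          rw [abs_of_pos hε.1]; linarith [hε.2]
        exact hne ε this θ
      exact this.aestronglyMeasurable
    · filter_upwards [hIoo] with ε hε
      filter_upwards with θ _
      exact hC _ (hmem ε hε θ)
    · exact intervalIntegrable_const
    · filter_upwards with θ _
      have h1 : Tendsto (fun ε : ℝ => v - ε • ω θ) (𝓝[>] (0:ℝ)) (𝓝[{(0:ℝ×ℝ)}ᶜ] v) := by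
        rw [tendsto_nhdsWithin_iff]
        constructor
        · have hc : Continuous fun ε : ℝ => v - ε • ω θ := by fun_prop
          have := hc.tendsto 0
          simp only [zero_smul, sub_zero] at this
          exact this.mono_left nhdsWithin_le_nhds
        · filter_upwards [hIoo] with ε hε
          have : |ε| < ‖v‖ := by rw [abs_of_pos hε.1]; linarith [hε.2]
          exact hne ε this θ
      exact ((hu v hv).tendsto).comp h1
  have hFconst : (∫ θ in (0:ℝ)..(2 * Real.pi), u v) = 2 * Real.pi * u v := by
    rw [intervalIntegral.integral_const, smul_eq_mul, sub_zero]
  have step3 : Tendsto F (𝓝[>] (0:ℝ)) (𝓝 0) := by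
    apply Tendsto.congr' _ (tendsto_const_nhds (α := ℝ))
    filter_upwards [hIoo] with ε hε
    exact (step1 ε hε.1 (by linarith [hε.2])).symm
  have := tendsto_nhds_unique step2 step3
  rw [hFconst] at this
  have hπ : (2 * Real.pi) ≠ 0 := by positivity
  exact (mul_eq_zero.mp this).resolve_left hπ
end

section
/- Let X be a separable Hilbert space and T a compact self-adjoint operator on X with singular values s_j(T) (non-increasing). Suppose s_j(T) ≤ C j^{-ρ/2} for all j ≥ 1 (some C > 0, ρ ∈ (0,1)) and s_1(T) ≤ A for some A ∈ (0, C]. Then for every ℓ > 2/ρ and every N ∈ ℕ, Σ_{j=1}^∞ s_j(T)^ℓ ≤ A^{ℓ − 2/ρ} C^{2/ρ} Σ_{j=1}^N j^{-1} + C^ℓ Σ_{j=N+1}^∞ j^{-ℓρ/2} ≤ const·(A^{ℓ−2/ρ}(1 + ln N) + N^{1 − ℓρ/2}) with a constant depending only on C, ρ, ℓ. -/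
set_option maxHeartbeats 1000000


/-- The `j`-th approximation number (= singular number, for operators on a Hilbert
space) of `T`, for `j ≥ 1`: the distance from `T` to operators of rank `< j`. -/
noncomputable def singNum {X : Type*} [NormedAddCommGroup X] [InnerProductSpace ℂ X]
    (T : X →L[ℂ] X) (j : ℕ) : ℝ :=
  sInf { r : ℝ | ∃ F : X →L[ℂ] X,
    FiniteDimensional ℂ (LinearMap.range (F : X →ₗ[ℂ] X)) ∧
    Module.finrank ℂ (LinearMap.range (F : X →ₗ[ℂ] X)) < j ∧ r = ‖T - F‖ }

section aux
variable {X : Type*} [NormedAddCommGroup X] [InnerProductSpace ℂ X]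

lemma singNum_nonneg (T : X →L[ℂ] X) (j : ℕ) : 0 ≤ singNum T j :=
  Real.sInf_nonneg (fun _r ⟨_F, _, _, hr⟩ => hr ▸ norm_nonneg _)

lemma singNum_set_mem_zero (T : X →L[ℂ] X) {j : ℕ} (hj : 1 ≤ j) :
    ‖T - 0‖ ∈ { r : ℝ | ∃ F : X →L[ℂ] X,
    FiniteDimensional ℂ (LinearMap.range (F : X →ₗ[ℂ] X)) ∧
    Module.finrank ℂ (LinearMap.range (F : X →ₗ[ℂ] X)) < j ∧ r = ‖T - F‖ } := by
  refine ⟨0, ?_, ?_, rfl⟩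
  · have h0 : ((0 : X →L[ℂ] X) : X →ₗ[ℂ] X) = 0 := rfl
    rw [h0, LinearMap.range_zero]
    infer_instance
  · have h0 : ((0 : X →L[ℂ] X) : X →ₗ[ℂ] X) = 0 := rfl
    rw [h0, LinearMap.range_zero, finrank_bot]
    exact hj

lemma singNum_antitone (T : X →L[ℂ] X) {j k : ℕ} (hj : 1 ≤ j) (hjk : j ≤ k) :
    singNum T k ≤ singNum T j := by
  apply csInf_le_csInf
  · exact ⟨0, fun r ⟨F, _, _, hr⟩ => hr ▸ norm_nonneg _⟩
  · exact ⟨_, singNum_set_mem_zero T hj⟩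
  · rintro r ⟨F, h1, h2, h3⟩
    exact ⟨F, h1, lt_of_lt_of_le h2 hjk, h3⟩

end aux

lemma tail_step {s a : ℝ} (hs : 1 < s) (ha : 1 ≤ a) :
    (a + 1) ^ (-s) ≤ (a ^ (1 - s) - (a + 1) ^ (1 - s)) / (s - 1) := by
  have ha0 : (0:ℝ) < a := lt_of_lt_of_le one_pos ha
  have hnotin : (0:ℝ) ∉ Set.uIcc a (a + 1) := by
    rw [Set.uIcc_of_le (by linarith)]
    intro h
    exact absurd h.1 (by linarith)
  have hint : ∫ x in a..(a+1), x ^ (-s) =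
      ((a+1) ^ (-s + 1) - a ^ (-s + 1)) / (-s + 1) :=
    integral_rpow (Or.inr ⟨by intro h; rw [neg_eq_iff_eq_neg] at h; linarith, hnotin⟩)
  have hmono : (a + 1) ^ (-s) ≤ ∫ x in a..(a+1), x ^ (-s) := by
    have hconst : ∫ _x in a..(a+1), (a + 1) ^ (-s) = (a + 1) ^ (-s) := by
      simp
    rw [← hconst]
    apply intervalIntegral.integral_mono_on (by linarith)
    · exact intervalIntegrable_const
    · exact intervalIntegral.intervalIntegrable_rpow (Or.inr hnotin)
    · intro x hx
      exact Real.rpow_le_rpow_of_nonpos (by linarith [hx.1]) hx.2 (by linarith)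
  calc (a + 1) ^ (-s) ≤ ((a+1) ^ (-s + 1) - a ^ (-s + 1)) / (-s + 1) := hint ▸ hmono
    _ = (a ^ (1 - s) - (a + 1) ^ (1 - s)) / (s - 1) := by
        rw [show (-s + 1 : ℝ) = 1 - s by ring]
        rw [div_eq_div_iff (by linarith) (by linarith)]
        ring

lemma tail_bound {s : ℝ} (hs : 1 < s) {N : ℕ} (hN : 1 ≤ N) :
    ∑' j : ℕ, ((N + j + 1 : ℕ) : ℝ) ^ (-s) ≤ (N : ℝ) ^ (1 - s) / (s - 1) := by
  have hN1 : (1:ℝ) ≤ (N:ℝ) := by exact_mod_cast hN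
  apply Real.tsum_le_of_sum_range_le
  · intro n; positivity
  · intro n
    have key : ∀ m : ℕ, ∑ i ∈ Finset.range m, ((N + i + 1 : ℕ) : ℝ) ^ (-s) ≤
        ((N : ℝ) ^ (1 - s) - ((N + m : ℕ) : ℝ) ^ (1 - s)) / (s - 1) := by
      intro m
      induction m with
      | zero => simp
      | succ m ih =>
          rw [Finset.sum_range_succ]
          have hstep := tail_step hs
            (le_trans hN1 (by push_cast; linarith [Nat.cast_nonneg (α := ℝ) m] :
              (N:ℝ) ≤ ((N + m : ℕ) : ℝ)))
          have hcast1 : ((N + m + 1 : ℕ) : ℝ) = ((N + m : ℕ) : ℝ) + 1 := by push_cast; ring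
          have hcast2 : ((N + (m + 1) : ℕ) : ℝ) = ((N + m : ℕ) : ℝ) + 1 := by push_cast; ring
          rw [hcast1, hcast2]
          calc _ ≤ ((N : ℝ) ^ (1 - s) - ((N + m : ℕ) : ℝ) ^ (1 - s)) / (s - 1)
                + ((((N + m : ℕ) : ℝ)) ^ (1 - s) - (((N + m : ℕ) : ℝ) + 1) ^ (1 - s)) / (s - 1) :=
              add_le_add ih hstep
            _ = ((N : ℝ) ^ (1 - s) - (((N + m : ℕ) : ℝ) + 1) ^ (1 - s)) / (s - 1) := by ring
    calc ∑ i ∈ Finset.range n, ((N + i + 1 : ℕ) : ℝ) ^ (-s)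
        ≤ ((N : ℝ) ^ (1 - s) - ((N + n : ℕ) : ℝ) ^ (1 - s)) / (s - 1) := key n
      _ ≤ (N : ℝ) ^ (1 - s) / (s - 1) := by
          have h1 : (0:ℝ) ≤ ((N + n : ℕ) : ℝ) ^ (1 - s) := by positivity
          apply div_le_div_of_nonneg_right (by linarith) (by linarith) |>.trans_eq rfl

/-- the singular-value splitting estimate: if `s_j(T) ≤ C j^{-ρ/2}` and
`s_1(T) ≤ A ≤ C`, then for `ℓ > 2/ρ` and every `N ≥ 1`,
`Σ_j s_j(T)^ℓ ≤ A^{ℓ-2/ρ} C^{2/ρ} Σ_{j=1}^N j⁻¹ + C^ℓ Σ_{j>N} j^{-ℓρ/2}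
  ≤ K (A^{ℓ-2/ρ}(1+ln N) + N^{1-ℓρ/2})` with `K = K(C,ρ,ℓ)`. -/
theorem singular_value_splitting {X : Type*} [NormedAddCommGroup X]
    [InnerProductSpace ℂ X] [CompleteSpace X]
    (C ρ ℓ : ℝ) (hC : 0 < C) (hρ0 : 0 < ρ) (hρ1 : ρ < 1) (hℓ : 2 / ρ < ℓ) :
    ∃ K : ℝ, 0 < K ∧
      ∀ (T : X →L[ℂ] X), IsCompactOperator T → IsSelfAdjoint T →
      ∀ A : ℝ, 0 < A → A ≤ C →
      (∀ j : ℕ, 1 ≤ j → singNum T j ≤ C * (j : ℝ) ^ (-ρ / 2)) →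
      singNum T 1 ≤ A →
      ∀ N : ℕ, 1 ≤ N →
        (∑' j : ℕ, singNum T (j + 1) ^ ℓ) ≤
            A ^ (ℓ - 2 / ρ) * C ^ (2 / ρ) * (∑ j ∈ Finset.Icc 1 N, (j : ℝ)⁻¹)
              + C ^ ℓ * ∑' j : ℕ, ((N + j + 1 : ℕ) : ℝ) ^ (-(ℓ * ρ / 2)) ∧
        A ^ (ℓ - 2 / ρ) * C ^ (2 / ρ) * (∑ j ∈ Finset.Icc 1 N, (j : ℝ)⁻¹)
              + C ^ ℓ * (∑' j : ℕ, ((N + j + 1 : ℕ) : ℝ) ^ (-(ℓ * ρ / 2))) ≤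
          K * (A ^ (ℓ - 2 / ρ) * (1 + Real.log N) + (N : ℝ) ^ (1 - ℓ * ρ / 2)) := by
  have hρ : (0:ℝ) < 2 / ρ := by positivity
  have hℓ0 : 0 < ℓ := lt_trans hρ hℓ
  set s : ℝ := ℓ * ρ / 2 with hs_def
  have hs1 : 1 < s := by
    rw [hs_def]
    rw [div_lt_iff₀ hρ0] at hℓ
    nlinarith
  have hsub : 0 ≤ ℓ - 2 / ρ := by linarith
  refine ⟨max (C ^ (2 / ρ)) (C ^ ℓ / (s - 1)), lt_max_iff.mpr (Or.inl (by positivity)), ?_⟩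
  intro T _ _ A hA0 hAC hCj h1A N hN
  set g : ℕ → ℝ := fun j => singNum T (j + 1) with hg_def
  have hg0 : ∀ j, 0 ≤ g j := fun j => singNum_nonneg _ _
  have hgA : ∀ j, g j ≤ A := fun j =>
    (singNum_antitone T le_rfl (Nat.le_add_left 1 j)).trans h1A
  have hgC : ∀ j, g j ≤ C * ((j + 1 : ℕ) : ℝ) ^ (-ρ / 2) := fun j =>
    hCj (j + 1) (Nat.le_add_left 1 j)
  -- global bound with exponent ℓ
  have hexp : -ρ / 2 * ℓ = -s := by rw [hs_def]; ring
  have hCbound : ∀ j : ℕ, g j ^ ℓ ≤ C ^ ℓ * ((j + 1 : ℕ) : ℝ) ^ (-s) := by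
    intro j
    calc g j ^ ℓ ≤ (C * ((j + 1 : ℕ) : ℝ) ^ (-ρ / 2)) ^ ℓ :=
          Real.rpow_le_rpow (hg0 j) (hgC j) hℓ0.le
      _ = C ^ ℓ * ((j + 1 : ℕ) : ℝ) ^ (-s) := by
          rw [Real.mul_rpow hC.le (by positivity),
            ← Real.rpow_mul (Nat.cast_nonneg _), hexp]
  -- summability
  have hsum_base : Summable (fun j : ℕ => ((j + 1 : ℕ) : ℝ) ^ (-s)) := by
    have h0 : Summable (fun n : ℕ => (n : ℝ) ^ (-s)) :=
      Real.summable_nat_rpow.mpr (by linarith)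
    exact (summable_nat_add_iff 1).mpr h0
  have hsum : Summable (fun j : ℕ => g j ^ ℓ) :=
    Summable.of_nonneg_of_le (fun j => Real.rpow_nonneg (hg0 j) ℓ) hCbound
      (hsum_base.mul_left _)
  have hsum_tail : Summable (fun j : ℕ => ((N + j + 1 : ℕ) : ℝ) ^ (-s)) := by
    have h0 : Summable (fun n : ℕ => (n : ℝ) ^ (-s)) :=
      Real.summable_nat_rpow.mpr (by linarith)
    have := (summable_nat_add_iff (f := fun n : ℕ => (n : ℝ) ^ (-s)) (N + 1)).mpr h0
    refine this.congr fun j => ?_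
    congr 2
    omega
  -- chunk 1 termwise bound
  have hchunk1 : ∀ j : ℕ, g j ^ ℓ ≤
      A ^ (ℓ - 2 / ρ) * C ^ (2 / ρ) * ((j + 1 : ℕ) : ℝ)⁻¹ := by
    intro j
    have hsplitpow : g j ^ ℓ = g j ^ (ℓ - 2 / ρ) * g j ^ (2 / ρ) := by
      rw [← Real.rpow_add_of_nonneg (hg0 j) hsub hρ.le]
      norm_num
    rw [hsplitpow]
    have h1 : g j ^ (ℓ - 2 / ρ) ≤ A ^ (ℓ - 2 / ρ) :=
      Real.rpow_le_rpow (hg0 j) (hgA j) hsub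
    have h2 : g j ^ (2 / ρ) ≤ C ^ (2 / ρ) * ((j + 1 : ℕ) : ℝ)⁻¹ := by
      calc g j ^ (2 / ρ) ≤ (C * ((j + 1 : ℕ) : ℝ) ^ (-ρ / 2)) ^ (2 / ρ) :=
            Real.rpow_le_rpow (hg0 j) (hgC j) hρ.le
        _ = C ^ (2 / ρ) * ((j + 1 : ℕ) : ℝ)⁻¹ := by
            rw [Real.mul_rpow hC.le (by positivity),
              ← Real.rpow_mul (Nat.cast_nonneg _),
              show -ρ / 2 * (2 / ρ) = -1 by field_simp,
              Real.rpow_neg_one]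
    calc g j ^ (ℓ - 2 / ρ) * g j ^ (2 / ρ)
        ≤ A ^ (ℓ - 2 / ρ) * (C ^ (2 / ρ) * ((j + 1 : ℕ) : ℝ)⁻¹) := by
          apply mul_le_mul h1 h2 (Real.rpow_nonneg (hg0 j) _) (by positivity)
      _ = A ^ (ℓ - 2 / ρ) * C ^ (2 / ρ) * ((j + 1 : ℕ) : ℝ)⁻¹ := by ring
  -- reindex harmonic sum
  have hreindex : (∑ j ∈ Finset.Icc 1 N, ((j : ℝ))⁻¹) =
      ∑ i ∈ Finset.range N, ((i + 1 : ℕ) : ℝ)⁻¹ := by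
    rw [← Finset.Ico_add_one_right_eq_Icc, Finset.sum_Ico_eq_sum_range]
    simp [add_comm]
  constructor
  · -- first inequality
    rw [← hsum.sum_add_tsum_nat_add N]
    apply add_le_add
    · rw [hreindex, Finset.mul_sum]
      exact Finset.sum_le_sum fun i _ => hchunk1 i
    · have hle : ∀ j : ℕ, g (j + N) ^ ℓ ≤ C ^ ℓ * ((N + j + 1 : ℕ) : ℝ) ^ (-s) := by
        intro j
        rw [show N + j + 1 = j + N + 1 from by omega]
        exact hCbound (j + N)
      calc (∑' j : ℕ, g (j + N) ^ ℓ)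
          ≤ ∑' j : ℕ, C ^ ℓ * ((N + j + 1 : ℕ) : ℝ) ^ (-s) :=
            Summable.tsum_le_tsum hle ((summable_nat_add_iff (f := fun j : ℕ => g j ^ ℓ) N).mpr hsum) (hsum_tail.mul_left _)
        _ = C ^ ℓ * ∑' j : ℕ, ((N + j + 1 : ℕ) : ℝ) ^ (-s) := tsum_mul_left
  · -- second inequality
    have hN1 : (1:ℝ) ≤ (N:ℝ) := by exact_mod_cast hN
    have hlog : 0 ≤ Real.log N := Real.log_nonneg hN1
    have hA' : 0 ≤ A ^ (ℓ - 2 / ρ) := Real.rpow_nonneg hA0.le _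
    have hH : (∑ j ∈ Finset.Icc 1 N, ((j : ℝ))⁻¹) ≤ 1 + Real.log N := by
      have h := harmonic_le_one_add_log N
      rw [harmonic_eq_sum_Icc] at h
      push_cast at h
      exact h
    have hT : (∑' j : ℕ, ((N + j + 1 : ℕ) : ℝ) ^ (-s)) ≤ (N : ℝ) ^ (1 - s) / (s - 1) :=
      tail_bound hs1 hN
    have hK1 : C ^ (2 / ρ) ≤ max (C ^ (2 / ρ)) (C ^ ℓ / (s - 1)) := le_max_left _ _
    have hK2 : C ^ ℓ / (s - 1) ≤ max (C ^ (2 / ρ)) (C ^ ℓ / (s - 1)) := le_max_right _ _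
    calc A ^ (ℓ - 2 / ρ) * C ^ (2 / ρ) * (∑ j ∈ Finset.Icc 1 N, ((j : ℝ))⁻¹)
            + C ^ ℓ * (∑' j : ℕ, ((N + j + 1 : ℕ) : ℝ) ^ (-s))
        ≤ A ^ (ℓ - 2 / ρ) * C ^ (2 / ρ) * (1 + Real.log N)
            + C ^ ℓ * ((N : ℝ) ^ (1 - s) / (s - 1)) := by
          gcongr <;> positivity
      _ = C ^ (2 / ρ) * (A ^ (ℓ - 2 / ρ) * (1 + Real.log N))
            + (C ^ ℓ / (s - 1)) * (N : ℝ) ^ (1 - s) := by ring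
      _ ≤ max (C ^ (2 / ρ)) (C ^ ℓ / (s - 1)) * (A ^ (ℓ - 2 / ρ) * (1 + Real.log N))
            + max (C ^ (2 / ρ)) (C ^ ℓ / (s - 1)) * (N : ℝ) ^ (1 - s) := by
          apply add_le_add
          · exact mul_le_mul_of_nonneg_right hK1 (by positivity)
          · exact mul_le_mul_of_nonneg_right hK2 (by positivity)
      _ = max (C ^ (2 / ρ)) (C ^ ℓ / (s - 1)) *
            (A ^ (ℓ - 2 / ρ) * (1 + Real.log N) + (N : ℝ) ^ (1 - s)) := by ring
end
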